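/- If A is a nonsingular n×n real matrix and Δ ≥ 0, and σ_n(A) > σ_1(Δ), where σ_n(A) is the smallest singular value of A and σ_1(Δ) is the largest singular value of Δ, then every matrix M with |M − A| ≤ Δ entrywise is nonsingular. -/

import Mathlib

open Matrix
open scoped ENNReal NNReal

noncomputable def sigmaMin {n : ℕ} (A : Matrix (Fin n) (Fin n) ℝ) : ℝ :=
  Real.sqrt (sInf (spectrum ℝ (Aᵀ * A)))

noncomputable def sigmaMax {n : ℕ} (A : Matrix (Fin n) (Fin n) ℝ) : ℝ :=
  Real.sqrt (sSup (spectrum ℝ (Aᵀ * A)))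

/-- Rayleigh quotient bounds for a real symmetric matrix. -/
lemma rayleigh_bounds {n : ℕ} (B : Matrix (Fin n) (Fin n) ℝ) (hB : B.IsHermitian)
    (c C : ℝ) (hc : ∀ i, c ≤ hB.eigenvalues i) (hC : ∀ i, hB.eigenvalues i ≤ C)
    (x : Fin n → ℝ) :
    c * (x ⬝ᵥ x) ≤ x ⬝ᵥ B *ᵥ x ∧ x ⬝ᵥ B *ᵥ x ≤ C * (x ⬝ᵥ x) := by
  set U : Matrix (Fin n) (Fin n) ℝ := (hB.eigenvectorUnitary : Matrix (Fin n) (Fin n) ℝ)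
  have hU1 : U * star U = 1 := (Matrix.mem_unitaryGroup_iff).mp hB.eigenvectorUnitary.2
  set y : Fin n → ℝ := (star U) *ᵥ x with hy
  have hxx : x ⬝ᵥ x = y ⬝ᵥ y := by
    have hstar : star U = Uᵀ := by
      simp [Matrix.star_eq_conjTranspose, Matrix.conjTranspose_eq_transpose_of_trivial]
    calc x ⬝ᵥ x = x ⬝ᵥ (1 : Matrix (Fin n) (Fin n) ℝ) *ᵥ x := by rw [one_mulVec]
      _ = x ⬝ᵥ (U * star U) *ᵥ x := by rw [hU1]
      _ = x ⬝ᵥ U *ᵥ y := by rw [← mulVec_mulVec]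
      _ = (x ᵥ* U) ⬝ᵥ y := by rw [dotProduct_mulVec]
      _ = y ⬝ᵥ y := by rw [hy, hstar, mulVec_transpose]
  have hBxy : x ⬝ᵥ B *ᵥ x = ∑ i, hB.eigenvalues i * (y i)^2 := by
    have hstar : star U = Uᵀ := by
      simp [Matrix.star_eq_conjTranspose, Matrix.conjTranspose_eq_transpose_of_trivial]
    have hspec := hB.spectral_theorem
    calc x ⬝ᵥ B *ᵥ x
        = x ⬝ᵥ (U * diagonal (RCLike.ofReal ∘ hB.eigenvalues) * star U) *ᵥ x := by
          exact congrArg (fun B' => x ⬝ᵥ B' *ᵥ x) hspec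
      _ = x ⬝ᵥ U *ᵥ (diagonal (RCLike.ofReal ∘ hB.eigenvalues) *ᵥ y) := by
          rw [← mulVec_mulVec, ← mulVec_mulVec]
      _ = (x ᵥ* U) ⬝ᵥ (diagonal (RCLike.ofReal ∘ hB.eigenvalues) *ᵥ y) := by
          rw [dotProduct_mulVec]
      _ = y ⬝ᵥ (diagonal (RCLike.ofReal ∘ hB.eigenvalues) *ᵥ y) := by
          rw [hy, hstar, mulVec_transpose]
      _ = ∑ i, hB.eigenvalues i * (y i)^2 := by
          simp [dotProduct, mulVec_diagonal, sq]
          ring_nf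
          exact Finset.sum_congr rfl fun i _ => by ring
  have hyy : y ⬝ᵥ y = ∑ i, (y i)^2 := by simp [dotProduct, sq]
  constructor
  · rw [hBxy, hxx, hyy, Finset.mul_sum]
    exact Finset.sum_le_sum fun i _ => mul_le_mul_of_nonneg_right (hc i) (sq_nonneg _)
  · rw [hBxy, hxx, hyy, Finset.mul_sum]
    exact Finset.sum_le_sum fun i _ => mul_le_mul_of_nonneg_right (hC i) (sq_nonneg _)

lemma rayleigh_lower {n : ℕ} (B : Matrix (Fin n) (Fin n) ℝ) (hB : B.IsHermitian)
    (c : ℝ) (hc : ∀ i, c ≤ hB.eigenvalues i) (x : Fin n → ℝ) :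
    c * (x ⬝ᵥ x) ≤ x ⬝ᵥ B *ᵥ x := by
  classical
  rcases isEmpty_or_nonempty (Fin n) with hn | hn
  · simp [dotProduct, Finset.sum_of_isEmpty]
  · obtain ⟨C, hC⟩ := Finite.exists_le hB.eigenvalues
    exact (rayleigh_bounds B hB c C hc hC x).1

lemma rayleigh_upper {n : ℕ} (B : Matrix (Fin n) (Fin n) ℝ) (hB : B.IsHermitian)
    (C : ℝ) (hC : ∀ i, hB.eigenvalues i ≤ C) (x : Fin n → ℝ) :
    x ⬝ᵥ B *ᵥ x ≤ C * (x ⬝ᵥ x) := by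
  classical
  rcases isEmpty_or_nonempty (Fin n) with hn | hn
  · simp [dotProduct, Finset.sum_of_isEmpty]
  · obtain ⟨c, hc⟩ := Finite.exists_le (fun i => - hB.eigenvalues i)
    exact (rayleigh_bounds B hB (-c) C (fun i => by linarith [hc i]) hC x).2

theorem regular_of_sigma_gt {n : ℕ} (A Δ : Matrix (Fin n) (Fin n) ℝ)
    (hA : A.det ≠ 0) (hΔ : ∀ i j, 0 ≤ Δ i j)
    (h : sigmaMax Δ < sigmaMin A) :
    ∀ M : Matrix (Fin n) (Fin n) ℝ, (∀ i j, |M i j - A i j| ≤ Δ i j) → M.det ≠ 0 := by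
  intro M hM hdet
  obtain ⟨x, hx0, hMx⟩ := (Matrix.exists_mulVec_eq_zero_iff).mpr hdet
  set y : Fin n → ℝ := fun j => |x j| with hy
  -- hermitian structure
  have hBA : (Aᵀ * A).IsHermitian := by
    have := Matrix.isHermitian_conjTranspose_mul_self A
    simpa [Matrix.conjTranspose_eq_transpose_of_trivial] using this
  have hBΔ : (Δᵀ * Δ).IsHermitian := by
    have := Matrix.isHermitian_conjTranspose_mul_self Δ
    simpa [Matrix.conjTranspose_eq_transpose_of_trivial] using this
  have hspecA : spectrum ℝ (Aᵀ * A) = Set.range hBA.eigenvalues :=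
    hBA.spectrum_real_eq_range_eigenvalues
  have hspecΔ : spectrum ℝ (Δᵀ * Δ) = Set.range hBΔ.eigenvalues :=
    hBΔ.spectrum_real_eq_range_eigenvalues
  set c := sInf (spectrum ℝ (Aᵀ * A)) with hc'
  set C := sSup (spectrum ℝ (Δᵀ * Δ)) with hC'
  have hcle : ∀ i, c ≤ hBA.eigenvalues i := fun i => by
    rw [hc', hspecA]
    exact csInf_le ((Set.finite_range _).bddBelow) ⟨i, rfl⟩
  have hCle : ∀ i, hBΔ.eigenvalues i ≤ C := fun i => by
    rw [hC', hspecΔ]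
    exact le_csSup ((Set.finite_range _).bddAbove) ⟨i, rfl⟩
  have hAx := rayleigh_lower (Aᵀ * A) hBA c hcle x
  have hΔy := rayleigh_upper (Δᵀ * Δ) hBΔ C hCle y
  -- rewrite quadratic forms
  have hquadA : x ⬝ᵥ (Aᵀ * A) *ᵥ x = (A *ᵥ x) ⬝ᵥ (A *ᵥ x) := by
    rw [← mulVec_mulVec, dotProduct_mulVec, vecMul_transpose]
  have hquadΔ : y ⬝ᵥ (Δᵀ * Δ) *ᵥ y = (Δ *ᵥ y) ⬝ᵥ (Δ *ᵥ y) := by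
    rw [← mulVec_mulVec, dotProduct_mulVec, vecMul_transpose]
  have hyy : y ⬝ᵥ y = x ⬝ᵥ x := by
    simp [dotProduct, hy, ← sq, sq_abs]
  -- entrywise bound : |(A *ᵥ x) i| ≤ (Δ *ᵥ y) i
  have hbound : ∀ i, |(A *ᵥ x) i| ≤ (Δ *ᵥ y) i := by
    intro i
    have hAxM : (A *ᵥ x) i = ∑ j, (A i j - M i j) * x j := by
      have : (M *ᵥ x) i = 0 := by rw [hMx]; rfl
      simp only [mulVec, dotProduct] at this ⊢
      rw [← sub_zero (∑ j, A i j * x j), ← this, ← Finset.sum_sub_distrib]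
      exact Finset.sum_congr rfl fun j _ => by ring
    rw [hAxM]
    calc |∑ j, (A i j - M i j) * x j| ≤ ∑ j, |(A i j - M i j) * x j| :=
          Finset.abs_sum_le_sum_abs _ _
      _ ≤ ∑ j, Δ i j * |x j| := by
          apply Finset.sum_le_sum
          intro j _
          rw [abs_mul, abs_sub_comm]
          exact mul_le_mul_of_nonneg_right (hM i j) (abs_nonneg _)
      _ = (Δ *ᵥ y) i := by simp [mulVec, dotProduct, hy]
  have hΔynn : ∀ i, 0 ≤ (Δ *ᵥ y) i := fun i =>
    le_trans (abs_nonneg _) (hbound i)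
  have hnormle : (A *ᵥ x) ⬝ᵥ (A *ᵥ x) ≤ (Δ *ᵥ y) ⬝ᵥ (Δ *ᵥ y) := by
    simp only [dotProduct, ← sq]
    apply Finset.sum_le_sum
    intro i _
    calc (A *ᵥ x) i ^ 2 = |(A *ᵥ x) i| ^ 2 := (sq_abs _).symm
      _ ≤ (Δ *ᵥ y) i ^ 2 := by
          apply pow_le_pow_left₀ (abs_nonneg _) (hbound i)
  have hxpos : 0 < x ⬝ᵥ x := by
    have h0 : x ⬝ᵥ x ≠ 0 := fun hxx => hx0 ((dotProduct_self_eq_zero).mp hxx)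
    have hnn : 0 ≤ x ⬝ᵥ x := Finset.sum_nonneg fun i _ => mul_self_nonneg (x i)
    exact lt_of_le_of_ne hnn (Ne.symm h0)
  -- chain
  have hchain : c * (x ⬝ᵥ x) ≤ C * (x ⬝ᵥ x) := by
    calc c * (x ⬝ᵥ x) ≤ x ⬝ᵥ (Aᵀ * A) *ᵥ x := hAx
      _ = (A *ᵥ x) ⬝ᵥ (A *ᵥ x) := hquadA
      _ ≤ (Δ *ᵥ y) ⬝ᵥ (Δ *ᵥ y) := hnormle
      _ = y ⬝ᵥ (Δᵀ * Δ) *ᵥ y := hquadΔ.symm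
      _ ≤ C * (y ⬝ᵥ y) := hΔy
      _ = C * (x ⬝ᵥ x) := by rw [hyy]
  have hcC : c ≤ C := le_of_mul_le_mul_right (by linarith) hxpos
  have : sigmaMin A ≤ sigmaMax Δ := by
    unfold sigmaMin sigmaMax
    exact Real.sqrt_le_sqrt hcC
  linarith [h]
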